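/- Let K ∈ ℕ and e : Fin K → ℝ. Then (for every k, e(k) = 0 or e(k) = 1) if and only if (Σ_{k} (e(k) − e(k)²) ≤ 0 and for every k, 0 ≤ e(k) ≤ 1). -/
import Mathlib


/-- Equivalence of the binary scheduling constraint C3 with the pair of continuous
constraints C3a and C3b. -/
theorem binary_iff_penalty_constraints (K : ℕ) (e : Fin K → ℝ) :
    (∀ k, e k = 0 ∨ e k = 1) ↔
      ((∑ k, (e k - (e k) ^ 2)) ≤ 0 ∧ ∀ k, 0 ≤ e k ∧ e k ≤ 1) := by
  constructor
  · intro h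
    constructor
    · have : ∀ k ∈ Finset.univ, e k - (e k) ^ 2 = 0 := by
        intro k _
        rcases h k with h0 | h0 <;> simp [h0]
      rw [Finset.sum_congr rfl this]
      simp
    · intro k
      rcases h k with h0 | h0 <;> simp [h0]
  · rintro ⟨hsum, hb⟩ k
    have hnn : ∀ j ∈ Finset.univ, (0:ℝ) ≤ e j - (e j) ^ 2 := by
      intro j _
      have := hb j
      nlinarith [this.1, this.2]
    have hk : e k - (e k) ^ 2 = 0 := by
      have := (Finset.sum_eq_zero_iff_of_nonneg hnn).mp
        (le_antisymm hsum (Finset.sum_nonneg hnn))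
      exact this k (Finset.mem_univ k)
    have : e k * (1 - e k) = 0 := by ring_nf; nlinarith [hk]
    rcases mul_eq_zero.mp this with h | h
    · left; exact h
    · right; linarith
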